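/- For α, β ∈ SL₂(ℕ), there exists γ ∈ SL₂(ℕ) with β = αγ if and only if all four of the following inequalities hold: α₁₁β₀₀ ≥ α₀₁β₁₀, α₁₁β₀₁ ≥ α₀₁β₁₁, α₀₀β₁₀ ≥ α₁₀β₀₀, and α₀₀β₁₁ ≥ α₁₀β₀₁. -/
import Mathlib


open Matrix

/-- In SL₂(ℕ), α is an initial substring of β (i.e. β = αγ for some γ in SL₂(ℕ))
iff the four stated inequalities hold, expressing that α⁻¹β has nonnegative
entries. -/
theorem sl2_nat_initial_substring_iff
    (α β : Matrix (Fin 2) (Fin 2) ℤ)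
    (hα : ∀ i j, 0 ≤ α i j) (hβ : ∀ i j, 0 ≤ β i j)
    (hdα : α.det = 1) (hdβ : β.det = 1) :
    (∃ γ : Matrix (Fin 2) (Fin 2) ℤ, (∀ i j, 0 ≤ γ i j) ∧ γ.det = 1 ∧ β = α * γ) ↔
      (α 1 1 * β 0 0 ≥ α 0 1 * β 1 0 ∧
       α 1 1 * β 0 1 ≥ α 0 1 * β 1 1 ∧
       α 0 0 * β 1 0 ≥ α 1 0 * β 0 0 ∧
       α 0 0 * β 1 1 ≥ α 1 0 * β 0 1) := by
  rw [Matrix.det_fin_two] at hdα hdβ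
  constructor
  · rintro ⟨γ, hγ, hdγ, rfl⟩
    simp only [Matrix.mul_apply, Fin.sum_univ_two, ge_iff_le]
    refine ⟨?_, ?_, ?_, ?_⟩ <;>
      nlinarith [hγ 0 0, hγ 0 1, hγ 1 0, hγ 1 1, hdα]
  · rintro ⟨h1, h2, h3, h4⟩
    refine ⟨!![α 1 1 * β 0 0 - α 0 1 * β 1 0, α 1 1 * β 0 1 - α 0 1 * β 1 1;
              α 0 0 * β 1 0 - α 1 0 * β 0 0, α 0 0 * β 1 1 - α 1 0 * β 0 1],
      ?_, ?_, ?_⟩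
    · intro i j
      fin_cases i <;> fin_cases j
      · exact sub_nonneg.mpr h1
      · exact sub_nonneg.mpr h2
      · exact sub_nonneg.mpr h3
      · exact sub_nonneg.mpr h4
    · rw [Matrix.det_fin_two_of]
      linear_combination (β 0 0 * β 1 1 - β 0 1 * β 1 0) * hdα + hdβ
    · ext i j
      fin_cases i <;> fin_cases j <;>
        simp [Matrix.mul_apply, Fin.sum_univ_two]
      · linear_combination (-(β 0 0)) * hdα
      · linear_combination (-(β 0 1)) * hdα
      · linear_combination (-(β 1 0)) * hdα
      · linear_combination (-(β 1 1)) * hdα
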